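/- Let X be a normed vector space over ℝ or ℂ, let γ ∈ (0,1), and let C₁, C₂, R > 0. Let F : ℝ → X satisfy F(0) = 0 and ‖F(λ) − F(μ)‖ ≤ C₁ |λ − μ|^γ for all λ, μ ∈ ℝ. Let ψ : ℝ → ℝ be bounded, satisfy |ψ(x) − ψ(y)| ≤ C₂ |x − y|^γ for all x, y ∈ ℝ, and be constant on [R, ∞) and constant on (−∞, −R]. Then there exists a constant C' (depending only on C₁, C₂, R, γ and the supremum of |ψ|) such that for every ε > 0 and all λ₁, λ₂ ∈ ℝ: ‖ψ(λ₂/ε) · F(λ₂) − ψ(λ₁/ε) · F(λ₁)‖ ≤ C' |λ₂ − λ₁|^γ. -/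

import Mathlib

private lemma rpow_add_le_add_rpow' {a b p : ℝ} (ha : 0 ≤ a) (hb : 0 ≤ b)
    (hp : 0 ≤ p) (hp1 : p ≤ 1) : (a + b) ^ p ≤ a ^ p + b ^ p := by
  have h := NNReal.rpow_add_le_add_rpow ⟨a, ha⟩ ⟨b, hb⟩ hp hp1
  have := NNReal.coe_le_coe.2 h
  exact this

/-- If `F : ℝ → X` is Hölder of order `γ ∈ (0,1)` with `F 0 = 0`, and `ψ : ℝ → ℝ`
is bounded, Hölder of order `γ`, and constant on `[R,∞)` and on `(-∞,-R]`, then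
the products `λ ↦ ψ(λ/ε) • F(λ)` are Hölder of order `γ` uniformly in `ε > 0`. -/
theorem stmt8 {X : Type*} [NormedAddCommGroup X] [NormedSpace ℝ X]
    (γ : ℝ) (hγ : γ ∈ Set.Ioo (0 : ℝ) 1)
    (C₁ C₂ R M : ℝ) (hC₁ : 0 < C₁) (hC₂ : 0 < C₂) (hR : 0 < R)
    (F : ℝ → X) (hF0 : F 0 = 0)
    (hF : ∀ lam mu : ℝ, ‖F lam - F mu‖ ≤ C₁ * |lam - mu| ^ γ)
    (ψ : ℝ → ℝ) (hψbd : ∀ x : ℝ, |ψ x| ≤ M)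
    (hψH : ∀ x y : ℝ, |ψ x - ψ y| ≤ C₂ * |x - y| ^ γ)
    (hψp : ∀ x : ℝ, R ≤ x → ψ x = ψ R)
    (hψm : ∀ x : ℝ, x ≤ -R → ψ x = ψ (-R)) :
    ∃ C' : ℝ, ∀ ε : ℝ, 0 < ε → ∀ lam₁ lam₂ : ℝ,
      ‖ψ (lam₂ / ε) • F lam₂ - ψ (lam₁ / ε) • F lam₁‖ ≤ C' * |lam₂ - lam₁| ^ γ := by
  obtain ⟨hγ0, hγ1⟩ := hγ
  have hM : 0 ≤ M := le_trans (abs_nonneg _) (hψbd 0)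
  have hRγ : (0:ℝ) ≤ R ^ γ := Real.rpow_nonneg hR.le γ
  refine ⟨M * C₁ + (C₁ * C₂ * R ^ γ + 2 * M * C₁), ?_⟩
  intro ε hε lam₁ lam₂
  have hΔ0 : (0:ℝ) ≤ |lam₂ - lam₁| := abs_nonneg _
  have hΔγ : (0:ℝ) ≤ |lam₂ - lam₁| ^ γ := Real.rpow_nonneg hΔ0 γ
  have key : ψ (lam₂ / ε) • F lam₂ - ψ (lam₁ / ε) • F lam₁
      = ψ (lam₂ / ε) • (F lam₂ - F lam₁) + (ψ (lam₂ / ε) - ψ (lam₁ / ε)) • F lam₁ := by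
    rw [smul_sub, sub_smul]; abel
  rw [key]
  have h1 : ‖ψ (lam₂ / ε) • (F lam₂ - F lam₁)‖ ≤ M * C₁ * |lam₂ - lam₁| ^ γ := by
    rw [norm_smul, Real.norm_eq_abs]
    have := hF lam₂ lam₁
    have hb := hψbd (lam₂ / ε)
    calc |ψ (lam₂ / ε)| * ‖F lam₂ - F lam₁‖
        ≤ M * (C₁ * |lam₂ - lam₁| ^ γ) := by
          apply mul_le_mul hb this (norm_nonneg _) hM
      _ = M * C₁ * |lam₂ - lam₁| ^ γ := by ring
  have h2 : ‖(ψ (lam₂ / ε) - ψ (lam₁ / ε)) • F lam₁‖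
      ≤ (C₁ * C₂ * R ^ γ + 2 * M * C₁) * |lam₂ - lam₁| ^ γ := by
    by_cases hne : ψ (lam₂ / ε) = ψ (lam₁ / ε)
    · rw [hne, sub_self, zero_smul, norm_zero]
      positivity
    · -- |lam₁| ≤ R*ε + |lam₂ - lam₁|
      have hlam1 : |lam₁| ≤ R * ε + |lam₂ - lam₁| := by
        by_contra h
        push_neg at h
        apply hne
        rcases lt_abs.mp h with h' | h'
        · have h2' : R * ε < lam₂ := by
            have : lam₁ - lam₂ ≤ |lam₂ - lam₁| := by
              rw [abs_sub_comm]; exact le_abs_self _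
            linarith
          have e1 : ψ (lam₂ / ε) = ψ R :=
            hψp _ ((le_div_iff₀ hε).2 (by linarith [h2'.le]))
          have e2 : ψ (lam₁ / ε) = ψ R :=
            hψp _ ((le_div_iff₀ hε).2 (by nlinarith))
          rw [e1, e2]
        · have h2' : lam₂ < -(R * ε) := by
            have : lam₂ - lam₁ ≤ |lam₂ - lam₁| := le_abs_self _
            linarith
          have e1 : ψ (lam₂ / ε) = ψ (-R) :=
            hψm _ ((div_le_iff₀ hε).2 (by linarith))
          have e2 : ψ (lam₁ / ε) = ψ (-R) :=
            hψm _ ((div_le_iff₀ hε).2 (by nlinarith))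
          rw [e1, e2]
      rw [norm_smul, Real.norm_eq_abs]
      have hFb : ‖F lam₁‖ ≤ C₁ * |lam₁| ^ γ := by
        simpa [hF0] using hF lam₁ 0
      have hεγ : (0:ℝ) < ε ^ γ := Real.rpow_pos_of_pos hε γ
      have hsplit : |lam₁| ^ γ ≤ R ^ γ * ε ^ γ + |lam₂ - lam₁| ^ γ := by
        calc |lam₁| ^ γ ≤ (R * ε + |lam₂ - lam₁|) ^ γ :=
              Real.rpow_le_rpow (abs_nonneg _) hlam1 hγ0.le
          _ ≤ (R * ε) ^ γ + |lam₂ - lam₁| ^ γ :=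
              rpow_add_le_add_rpow' (by positivity) hΔ0 hγ0.le hγ1.le
          _ = R ^ γ * ε ^ γ + |lam₂ - lam₁| ^ γ := by
              rw [Real.mul_rpow hR.le hε.le]
      have hψd1 : |ψ (lam₂ / ε) - ψ (lam₁ / ε)| ≤ C₂ * |lam₂ - lam₁| ^ γ / ε ^ γ := by
        have := hψH (lam₂ / ε) (lam₁ / ε)
        have heq : |lam₂ / ε - lam₁ / ε| = |lam₂ - lam₁| / ε := by
          rw [div_sub_div_same, abs_div, abs_of_pos hε]
        rw [heq] at this
        rw [Real.div_rpow hΔ0 hε.le] at this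
        calc |ψ (lam₂ / ε) - ψ (lam₁ / ε)| ≤ C₂ * (|lam₂ - lam₁| ^ γ / ε ^ γ) := this
          _ = C₂ * |lam₂ - lam₁| ^ γ / ε ^ γ := by ring
      have hψd2 : |ψ (lam₂ / ε) - ψ (lam₁ / ε)| ≤ 2 * M := by
        calc |ψ (lam₂ / ε) - ψ (lam₁ / ε)| ≤ |ψ (lam₂ / ε)| + |ψ (lam₁ / ε)| :=
              abs_sub _ _
          _ ≤ 2 * M := by linarith [hψbd (lam₂ / ε), hψbd (lam₁ / ε)]
      have hd0 : (0:ℝ) ≤ |ψ (lam₂ / ε) - ψ (lam₁ / ε)| := abs_nonneg _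
      calc |ψ (lam₂ / ε) - ψ (lam₁ / ε)| * ‖F lam₁‖
          ≤ |ψ (lam₂ / ε) - ψ (lam₁ / ε)| * (C₁ * (R ^ γ * ε ^ γ + |lam₂ - lam₁| ^ γ)) := by
            apply mul_le_mul_of_nonneg_left _ hd0
            calc ‖F lam₁‖ ≤ C₁ * |lam₁| ^ γ := hFb
              _ ≤ C₁ * (R ^ γ * ε ^ γ + |lam₂ - lam₁| ^ γ) :=
                  mul_le_mul_of_nonneg_left hsplit hC₁.le
        _ = |ψ (lam₂ / ε) - ψ (lam₁ / ε)| * (C₁ * R ^ γ * ε ^ γ)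
            + |ψ (lam₂ / ε) - ψ (lam₁ / ε)| * (C₁ * |lam₂ - lam₁| ^ γ) := by ring
        _ ≤ (C₂ * |lam₂ - lam₁| ^ γ / ε ^ γ) * (C₁ * R ^ γ * ε ^ γ)
            + (2 * M) * (C₁ * |lam₂ - lam₁| ^ γ) := by
            gcongr
        _ = (C₁ * C₂ * R ^ γ + 2 * M * C₁) * |lam₂ - lam₁| ^ γ := by
            field_simp
  calc ‖ψ (lam₂ / ε) • (F lam₂ - F lam₁) + (ψ (lam₂ / ε) - ψ (lam₁ / ε)) • F lam₁‖
      ≤ ‖ψ (lam₂ / ε) • (F lam₂ - F lam₁)‖ + ‖(ψ (lam₂ / ε) - ψ (lam₁ / ε)) • F lam₁‖ :=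
        norm_add_le _ _
    _ ≤ M * C₁ * |lam₂ - lam₁| ^ γ + (C₁ * C₂ * R ^ γ + 2 * M * C₁) * |lam₂ - lam₁| ^ γ := by
        linarith
    _ = (M * C₁ + (C₁ * C₂ * R ^ γ + 2 * M * C₁)) * |lam₂ - lam₁| ^ γ := by ring
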